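/- Let Γ be a finite simple graph and T a tree 2-spanner of Γ, and let C be an induced (chordless) cycle of Γ with at least 4 vertices. Then no edge of C belongs to T, and there exists a vertex w of Γ not on C such that for every vertex v of C the edge (w,v) belongs to T; in particular, the cycle C is contained in the star of w in Γ. -/

import Mathlib

/-- `T` is a tree 2-spanner of `G`. -/
def IsTree2Spanner {V : Type} (G T : SimpleGraph V) : Prop :=
  T ≤ G ∧ T.IsTree ∧ ∀ x y : V, T.dist x y ≤ 2 * G.dist x y

/-- The dual graph of a spanning tree `T` of `G`: vertices are the edges of `T`,
two of them being adjacent iff they are distinct and contained in a common triangle of `G`. -/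
def dualGraph {V : Type} (G T : SimpleGraph V) : SimpleGraph ↥T.edgeSet :=
  SimpleGraph.fromRel (fun e f =>
    ∃ a b c : V, G.Adj a b ∧ G.Adj b c ∧ G.Adj a c ∧
      (e : Sym2 V) ∈ ({s(a, b), s(b, c), s(a, c)} : Set (Sym2 V)) ∧
      (f : Sym2 V) ∈ ({s(a, b), s(b, c), s(a, c)} : Set (Sym2 V)))

private lemma cherry_aux {V : Type} {T : SimpleGraph V} (hc : T.Connected) {x y : V}
    (hxy : x ≠ y) (h2 : T.dist x y ≤ 2) :
    T.Adj x y ∨ ∃ w : V, T.Adj x w ∧ T.Adj w y := by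
  have hr : T.Reachable x y := hc.preconnected x y
  obtain ⟨p, hp⟩ := hr.exists_walk_length_eq_dist
  have hl : p.length ≤ 2 := hp.le.trans h2
  match p, hl with
  | SimpleGraph.Walk.nil, _ => exact absurd rfl hxy
  | SimpleGraph.Walk.cons h SimpleGraph.Walk.nil, _ => exact Or.inl h
  | SimpleGraph.Walk.cons h (SimpleGraph.Walk.cons h' SimpleGraph.Walk.nil), _ =>
      exact Or.inr ⟨_, h, h'⟩
  | SimpleGraph.Walk.cons h (SimpleGraph.Walk.cons h' (SimpleGraph.Walk.cons h'' q)), hl =>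
      simp only [SimpleGraph.Walk.length_cons] at hl
      omega

private lemma tree_bridge_aux {V : Type} {T : SimpleGraph V} (h : T.IsTree) {a b : V}
    (hab : T.Adj a b) :
    ¬ (T \ SimpleGraph.fromEdgeSet {s(a, b)}).Reachable a b := by
  have hB := (SimpleGraph.isAcyclic_iff_forall_adj_isBridge.mp h.IsAcyclic) hab
  exact SimpleGraph.isBridge_iff.mp hB

private lemma reach_around_aux {V : Type} {n : ℕ} (hn : 1 ≤ n) (T' : SimpleGraph V)
    (f : ZMod n → V) (i : ZMod n)
    (hstep : ∀ k : ℕ, k + 1 ≤ n - 1 →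
      T'.Reachable (f (i + 1 + (k : ℕ))) (f (i + 1 + (k : ℕ) + 1))) :
    T'.Reachable (f (i + 1)) (f i) := by
  have key : ∀ k : ℕ, k ≤ n - 1 → T'.Reachable (f (i + 1)) (f (i + 1 + (k : ℕ))) := by
    intro k
    induction k with
    | zero =>
        intro _
        simp only [Nat.cast_zero, add_zero]
        exact SimpleGraph.Reachable.refl _
    | succ k ih =>
        intro hk
        have h1 : ((k + 1 : ℕ) : ZMod n) = ((k : ℕ) : ZMod n) + 1 := by push_cast; ring
        rw [h1, ← add_assoc]
        exact (ih (by omega)).trans (hstep k hk)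
  have := key (n - 1) le_rfl
  have h2 : ((n - 1 : ℕ) : ZMod n) = -1 := by
    rw [Nat.cast_sub hn, ZMod.natCast_self]
    push_cast
    ring
  rw [h2] at this
  have h3 : i + 1 + (-1 : ZMod n) = i := by ring
  rwa [h3] at this

/-- Let `T` be a tree 2-spanner of `G` and let `f : ZMod n → V` (with `n ≥ 4`) be an induced
(chordless) cycle of `G`. Then no edge of the cycle lies in `T`, and there is a vertex `w` off
the cycle joined in `T` to every vertex of the cycle; in particular the cycle lies in the star
of `w`. -/
theorem stmt_11 {V : Type} [Fintype V] (G T : SimpleGraph V) (hT : IsTree2Spanner G T)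
    (n : ℕ) (hn : 4 ≤ n) (f : ZMod n → V) (hinj : Function.Injective f)
    (hcyc : ∀ i j : ZMod n, G.Adj (f i) (f j) ↔ (j = i + 1 ∨ i = j + 1)) :
    (∀ i : ZMod n, ¬T.Adj (f i) (f (i + 1))) ∧
    ∃ w : V, (∀ i : ZMod n, w ≠ f i) ∧ (∀ i : ZMod n, T.Adj w (f i)) := by
  obtain ⟨hle, htree, hdist⟩ := hT
  haveI : NeZero n := ⟨by omega⟩
  -- small nonzero naturals are nonzero in `ZMod n`
  have hcastne : ∀ k : ℕ, 0 < k → k < n → ((k : ℕ) : ZMod n) ≠ 0 := by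
    intro k hk hkn h
    rw [ZMod.natCast_eq_zero_iff] at h
    exact absurd (Nat.le_of_dvd hk h) (by omega)
  have h1 : ((1 : ℕ) : ZMod n) ≠ 0 := hcastne 1 (by omega) (by omega)
  have h2 : ((2 : ℕ) : ZMod n) ≠ 0 := hcastne 2 (by omega) (by omega)
  have h3 : ((3 : ℕ) : ZMod n) ≠ 0 := hcastne 3 (by omega) (by omega)
  -- adjacency along the cycle
  have hGadj : ∀ i : ZMod n, G.Adj (f i) (f (i + 1)) := fun i => (hcyc i (i + 1)).mpr (Or.inl rfl)
  -- each edge of the cycle is realized in `T` by an edge or a cherry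
  have hstep2 : ∀ i : ZMod n, T.Adj (f i) (f (i + 1)) ∨
      ∃ w : V, T.Adj (f i) w ∧ T.Adj w (f (i + 1)) := by
    intro i
    have hne : f i ≠ f (i + 1) := (hGadj i).ne
    have hd : G.dist (f i) (f (i + 1)) = 1 := SimpleGraph.dist_eq_one_iff_adj.mpr (hGadj i)
    have : T.dist (f i) (f (i + 1)) ≤ 2 := by
      have := hdist (f i) (f (i + 1)); omega
    exact cherry_aux htree.isConnected hne this
  -- midpoints of cherries lie off the cycle
  have hoff : ∀ i : ZMod n, ∀ w : V, T.Adj (f i) w → T.Adj w (f (i + 1)) →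
      ∀ m : ZMod n, w ≠ f m := by
    intro i w hw1 hw2 m hwm
    subst hwm
    have hG1 := (hcyc i m).mp (hle hw1)
    have hG2 := (hcyc m (i + 1)).mp (hle hw2)
    rcases hG1 with hm | hm <;> rcases hG2 with hm' | hm'
    · -- m = i + 1 and i + 1 = m + 1
      exact h1 (by push_cast; linear_combination -(hm + hm'))
    · -- m = i + 1 and m = i + 1 + 1
      exact h1 (by push_cast; linear_combination hm - hm')
    · -- i = m + 1 and i + 1 = m + 1
      exact h1 (by push_cast; linear_combination hm' - hm)
    · -- i = m + 1 and m = i + 1 + 1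
      exact h3 (by push_cast; linear_combination -(hm + hm'))
  -- Part 1: no edge of the cycle lies in `T`
  have part1 : ∀ i : ZMod n, ¬T.Adj (f i) (f (i + 1)) := by
    intro i hTa
    set T' := T \ SimpleGraph.fromEdgeSet {s(f i, f (i + 1))} with hT'
    have hbr := tree_bridge_aux htree hTa
    apply hbr
    have hT'adj : ∀ x y : V, T.Adj x y → s(x, y) ≠ s(f i, f (i + 1)) → T'.Adj x y := by
      intro x y hxy hne
      rw [hT']
      simp only [SimpleGraph.sdiff_adj, SimpleGraph.fromEdgeSet_adj, Set.mem_singleton_iff]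
      exact ⟨hxy, fun h => hne h.1⟩
    have hstep : ∀ j : ZMod n, j ≠ i → T'.Reachable (f j) (f (j + 1)) := by
      intro j hji
      rcases hstep2 j with hTj | ⟨w, hw1, hw2⟩
      · refine (hT'adj _ _ hTj ?_).reachable
        intro hS
        rw [Sym2.eq_iff] at hS
        rcases hS with ⟨ha, hb⟩ | ⟨ha, hb⟩
        · exact hji (hinj ha)
        · have hj : j = i + 1 := hinj ha
          have hj' : j + 1 = i := hinj hb
          exact h2 (by push_cast; linear_combination hj' - hj)
      · have hwoff := hoff j w hw1 hw2
        have r1 : T'.Adj (f j) w := by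
          refine hT'adj _ _ hw1 ?_
          intro hS
          rw [Sym2.eq_iff] at hS
          rcases hS with ⟨ha, hb⟩ | ⟨ha, hb⟩
          · exact hwoff _ hb
          · exact hwoff _ hb
        have r2 : T'.Adj w (f (j + 1)) := by
          refine hT'adj _ _ hw2 ?_
          intro hS
          rw [Sym2.eq_iff] at hS
          rcases hS with ⟨ha, hb⟩ | ⟨ha, hb⟩
          · exact hwoff _ ha
          · exact hwoff _ ha
        exact r1.reachable.trans r2.reachable
    refine (reach_around_aux (by omega) T' f i ?_).symm
    intro k hk
    apply hstep
    intro hcon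
    have : ((k + 1 : ℕ) : ZMod n) = 0 := by
      push_cast
      linear_combination hcon
    exact hcastne (k + 1) (by omega) (by omega) this
  refine ⟨part1, ?_⟩
  -- Part 2: cherries only; choose midpoints
  have hcherry : ∀ i : ZMod n, ∃ w : V, T.Adj (f i) w ∧ T.Adj w (f (i + 1)) := by
    intro i
    rcases hstep2 i with h | h
    · exact absurd h (part1 i)
    · exact h
  choose w hw1 hw2 using hcherry
  have hwoff : ∀ i m : ZMod n, w i ≠ f m := fun i => hoff i (w i) (hw1 i) (hw2 i)
  -- consecutive midpoints coincide
  have hconsec : ∀ i : ZMod n, w i = w (i + 1) := by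
    intro i
    by_contra hne
    set T' := T \ SimpleGraph.fromEdgeSet {s(w i, f (i + 1))} with hT'
    have hbr := tree_bridge_aux htree (hw2 i)
    apply hbr
    have hT'adj : ∀ x y : V, T.Adj x y → s(x, y) ≠ s(w i, f (i + 1)) → T'.Adj x y := by
      intro x y hxy hne'
      rw [hT']
      simp only [SimpleGraph.sdiff_adj, SimpleGraph.fromEdgeSet_adj, Set.mem_singleton_iff]
      exact ⟨hxy, fun h => hne' h.1⟩
    have hstep : ∀ j : ZMod n, j ≠ i → (j = i + 1 → w j ≠ w i) →
        T'.Reachable (f j) (f (j + 1)) := by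
      intro j hji hjw
      have r1 : T'.Adj (f j) (w j) := by
        refine hT'adj _ _ (hw1 j) ?_
        intro hS
        rw [Sym2.eq_iff] at hS
        rcases hS with ⟨ha, hb⟩ | ⟨ha, hb⟩
        · exact hwoff i j ha.symm
        · exact hjw (hinj ha) hb
      have r2 : T'.Adj (w j) (f (j + 1)) := by
        refine hT'adj _ _ (hw2 j) ?_
        intro hS
        rw [Sym2.eq_iff] at hS
        rcases hS with ⟨ha, hb⟩ | ⟨ha, hb⟩
        · exact hji (by have := hinj hb; linear_combination this)
        · exact hwoff j (i + 1) ha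
      exact r1.reachable.trans r2.reachable
    have hmain : T'.Reachable (f (i + 1)) (f i) := by
      refine reach_around_aux (by omega) T' f i ?_
      intro k hk
      apply hstep
      · intro hcon
        have : ((k + 1 : ℕ) : ZMod n) = 0 := by
          push_cast
          linear_combination hcon
        exact hcastne (k + 1) (by omega) (by omega) this
      · intro hcon hww
        have hk0c : ((k : ℕ) : ZMod n) = 0 := by
          linear_combination hcon
        have hk0 : k = 0 := by
          by_contra h0
          exact hcastne k (by omega) (by omega) hk0c
        subst hk0
        apply hne
        have hz : i + 1 + ((0 : ℕ) : ZMod n) = i + 1 := by push_cast; ring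
        rw [hz] at hww
        exact hww.symm
    have hlast : T'.Adj (f i) (w i) := by
      refine hT'adj _ _ (hw1 i) ?_
      intro hS
      rw [Sym2.eq_iff] at hS
      rcases hS with ⟨ha, hb⟩ | ⟨ha, hb⟩
      · exact hwoff i i ha.symm
      · exact h1 (by have := hinj ha; rw [Nat.cast_one]; linear_combination -this)
    exact (hmain.trans hlast.reachable).symm
  -- all midpoints coincide
  have hconst : ∀ i : ZMod n, w i = w 0 := by
    have key : ∀ k : ℕ, w ((k : ℕ) : ZMod n) = w 0 := by
      intro k
      induction k with
      | zero => simp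
      | succ k ih =>
          have hcast : ((k + 1 : ℕ) : ZMod n) = ((k : ℕ) : ZMod n) + 1 := by push_cast; ring
          rw [hcast, ← hconsec ((k : ℕ) : ZMod n)]
          exact ih
    intro i
    have := key i.val
    rwa [ZMod.natCast_zmod_val] at this
  refine ⟨w 0, fun i => hwoff 0 i, fun i => ?_⟩
  rw [← hconst i]
  exact (hw1 i).symm
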